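/- For the hypergraph G consisting of all k-element subsets of [n] (with 2 ≤ k ≤ n), the number of acyclic orientations with all heads singletons (i.e., vertex-orientations where no vertices get identified) equals n!/(k−1)!. -/

import Mathlib

open Finset

namespace Stmt3Aux

variable {n k : ℕ}

lemma filter_nonempty (hkn : k ≤ n) (f : Fin (n - k + 1) ↪ Fin n)
    (U : Finset (Fin n)) (hU : U.card = k) :
    (Finset.univ.filter fun j => f j ∈ U).Nonempty := by
  by_contra h
  rw [Finset.not_nonempty_iff_eq_empty, Finset.filter_eq_empty_iff] at h
  have hsub : Finset.univ.image f ⊆ Uᶜ := by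
    intro x hx
    simp only [Finset.mem_image] at hx
    obtain ⟨j, -, rfl⟩ := hx
    simpa using h (Finset.mem_univ j)
  have h1 : (Finset.univ.image f).card = n - k + 1 := by
    rw [Finset.card_image_of_injective _ f.injective, Finset.card_univ, Fintype.card_fin]
  have h2 : Uᶜ.card = n - k := by
    rw [Finset.card_compl, hU, Fintype.card_fin]
  have := Finset.card_le_card hsub
  omega

/-- The head function induced by an embedding. -/
noncomputable def Phi (hkn : k ≤ n) (f : Fin (n - k + 1) ↪ Fin n)
    (U : {U : Finset (Fin n) // U.card = k}) : Fin n :=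
  f ((Finset.univ.filter fun j => f j ∈ U.1).min' (filter_nonempty hkn f U.1 U.2))

lemma Phi_mem (hkn : k ≤ n) (f : Fin (n - k + 1) ↪ Fin n)
    (U : {U : Finset (Fin n) // U.card = k}) : Phi hkn f U ∈ U.1 := by
  have := Finset.min'_mem _ (filter_nonempty hkn f U.1 U.2)
  exact (Finset.mem_filter.mp this).2

/-- Weight function: the index of `x` in the range of `f`, or `n-k+1` if outside. -/
noncomputable def wt (f : Fin (n - k + 1) ↪ Fin n) (x : Fin n) : ℕ :=
  if hx : ∃ j, f j = x then (Classical.choose hx : Fin (n - k + 1)).val else n - k + 1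

lemma wt_eq (f : Fin (n - k + 1) ↪ Fin n) (j : Fin (n - k + 1)) :
    wt f (f j) = j.val := by
  have hx : ∃ j', f j' = f j := ⟨j, rfl⟩
  rw [wt, dif_pos hx]
  exact congrArg Fin.val (f.injective (Classical.choose_spec hx))

lemma wt_step (hkn : k ≤ n) (f : Fin (n - k + 1) ↪ Fin n) {a b : Fin n}
    (h : ∃ U : {U : Finset (Fin n) // U.card = k}, Phi hkn f U = a ∧ b ∈ U.1 ∧ b ≠ a) :
    wt f a < wt f b := by
  obtain ⟨U, rfl, hb, hne⟩ := h
  set j₀ := (Finset.univ.filter fun j => f j ∈ U.1).min' (filter_nonempty hkn f U.1 U.2) with hj₀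
  have hPhi : Phi hkn f U = f j₀ := rfl
  rw [hPhi, wt_eq]
  by_cases hbx : ∃ j, f j = b
  · obtain ⟨j, rfl⟩ := hbx
    rw [wt_eq]
    have hjmem : j ∈ Finset.univ.filter fun j => f j ∈ U.1 := by simpa using hb
    have hle : j₀ ≤ j := Finset.min'_le _ _ hjmem
    have hne' : j₀ ≠ j := fun h => hne (by rw [hPhi, h])
    have := Fin.val_ne_of_ne hne'
    have := Fin.le_def.mp hle
    omega
  · rw [wt, dif_neg hbx]
    exact j₀.isLt

lemma Phi_acyclic (hkn : k ≤ n) (f : Fin (n - k + 1) ↪ Fin n) (a : Fin n) :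
    ¬ Relation.TransGen
      (fun a b => ∃ U : {U : Finset (Fin n) // U.card = k},
        Phi hkn f U = a ∧ b ∈ U.1 ∧ b ≠ a) a a := by
  intro h
  have key : ∀ x y : Fin n, Relation.TransGen
      (fun a b => ∃ U : {U : Finset (Fin n) // U.card = k},
        Phi hkn f U = a ∧ b ∈ U.1 ∧ b ≠ a) x y → wt f x < wt f y := by
    intro x y hxy
    induction hxy with
    | single h => exact wt_step hkn f h
    | tail _ h ih => exact ih.trans (wt_step hkn f h)
  exact lt_irrefl _ (key a a h)

lemma Phi_injective (hk : 2 ≤ k) (hkn : k ≤ n) :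
    Function.Injective (Phi (n := n) (k := k) hkn) := by
  intro f g hfg
  suffices h : ∀ jv : ℕ, ∀ hj : jv < n - k + 1, f ⟨jv, hj⟩ = g ⟨jv, hj⟩ by
    ext j
    exact congrArg Fin.val (by have := h j.val j.isLt; simpa using this)
  intro jv
  induction jv using Nat.strong_induction_on with
  | _ jv ih =>
  intro hj
  set j : Fin (n - k + 1) := ⟨jv, hj⟩ with hjdef
  set Low : Finset (Fin n) :=
    Finset.univ.filter (fun x => ∃ i : Fin (n - k + 1), i < j ∧ f i = x) with hLow
  have hLowcard : Low.card = jv := by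
    have h1 : Low = (Finset.univ.filter (fun i : Fin (n - k + 1) => i < j)).image f := by
      ext x
      simp only [hLow, Finset.mem_filter, Finset.mem_univ, true_and, Finset.mem_image]
    have h2 : Finset.univ.filter (fun i : Fin (n - k + 1) => i < j) = Finset.Iio j := by
      ext i; simp
    rw [h1, Finset.card_image_of_injective _ f.injective, h2, Fin.card_Iio]
  have hfj : f j ∉ Low := by
    simp only [hLow, Finset.mem_filter, Finset.mem_univ, true_and, not_exists]
    rintro i ⟨hi, hfi⟩
    exact absurd (f.injective hfi) (Fin.ne_of_lt hi)
  have hgj : g j ∉ Low := by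
    simp only [hLow, Finset.mem_filter, Finset.mem_univ, true_and, not_exists]
    rintro i ⟨hi, hfi⟩
    have : f i = g i := ih i.val hi i.isLt
    rw [this] at hfi
    exact absurd (g.injective hfi) (Fin.ne_of_lt hi)
  have hVcard : Lowᶜ.card = n - jv := by
    rw [Finset.card_compl, hLowcard, Fintype.card_fin]
  have hsub : ({f j, g j} : Finset (Fin n)) ⊆ Lowᶜ := by
    intro x hx
    rw [Finset.mem_insert, Finset.mem_singleton] at hx
    rcases hx with rfl | rfl
    · exact Finset.mem_compl.mpr hfj
    · exact Finset.mem_compl.mpr hgj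
  have hcard2 : ({f j, g j} : Finset (Fin n)).card ≤ 2 :=
    le_trans (Finset.card_insert_le _ _) (by simp)
  obtain ⟨U, hU1, hU2, hU3⟩ := Finset.exists_subsuperset_card_eq hsub
    (hcard2.trans hk) (by rw [hVcard]; omega)
  -- the minimum index of U under f is j, and under g is j
  have hminf : (Finset.univ.filter fun i => f i ∈ U).min' (filter_nonempty hkn f U hU3) = j := by
    have hjmem : j ∈ Finset.univ.filter fun i => f i ∈ U := by
      simp only [Finset.mem_filter, Finset.mem_univ, true_and]
      exact hU1 (by simp)
    have hle := Finset.min'_le _ _ hjmem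
    have hmem := Finset.min'_mem _ (filter_nonempty hkn f U hU3)
    simp only [Finset.mem_filter, Finset.mem_univ, true_and] at hmem
    by_contra hne
    have hlt : (Finset.univ.filter fun i => f i ∈ U).min' (filter_nonempty hkn f U hU3) < j :=
      lt_of_le_of_ne hle hne
    have : f ((Finset.univ.filter fun i => f i ∈ U).min' (filter_nonempty hkn f U hU3)) ∈ Low := by
      simp only [hLow, Finset.mem_filter, Finset.mem_univ, true_and]
      exact ⟨_, hlt, rfl⟩
    exact absurd this (Finset.mem_compl.mp (hU2 hmem))
  have hming : (Finset.univ.filter fun i => g i ∈ U).min' (filter_nonempty hkn g U hU3) = j := by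
    have hjmem : j ∈ Finset.univ.filter fun i => g i ∈ U := by
      simp only [Finset.mem_filter, Finset.mem_univ, true_and]
      exact hU1 (by simp)
    have hle := Finset.min'_le _ _ hjmem
    have hmem := Finset.min'_mem _ (filter_nonempty hkn g U hU3)
    simp only [Finset.mem_filter, Finset.mem_univ, true_and] at hmem
    by_contra hne
    have hlt : (Finset.univ.filter fun i => g i ∈ U).min' (filter_nonempty hkn g U hU3) < j :=
      lt_of_le_of_ne hle hne
    set i := (Finset.univ.filter fun i => g i ∈ U).min' (filter_nonempty hkn g U hU3) with hidef
    have : g i ∈ Low := by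
      simp only [hLow, Finset.mem_filter, Finset.mem_univ, true_and]
      exact ⟨i, hlt, (ih i.val hlt i.isLt)⟩
    exact absurd this (Finset.mem_compl.mp (hU2 hmem))
  have h1 : Phi hkn f ⟨U, hU3⟩ = f j := by rw [Phi]; exact congrArg f hminf
  have h2 : Phi hkn g ⟨U, hU3⟩ = g j := by rw [Phi]; exact congrArg g hming
  rw [← h1, ← h2, hfg]

end Stmt3Aux

namespace Stmt3Aux2
open Stmt3Aux

lemma Phi_surjective {n k : ℕ} (hk : 2 ≤ k) (hkn : k ≤ n)
    (h : {U : Finset (Fin n) // U.card = k} → Fin n)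
    (hmem : ∀ U, h U ∈ U.1)
    (hacyc : ∀ a : Fin n, ¬ Relation.TransGen
      (fun a b => ∃ U, h U = a ∧ b ∈ U.1 ∧ b ≠ a) a a) :
    ∃ f, Phi hkn f = h := by
  classical
  set R : Fin n → Fin n → Prop := fun a b => ∃ U, h U = a ∧ b ∈ U.1 ∧ b ≠ a with hR
  set r : Fin n → Fin n → Prop := Relation.TransGen R with hr
  have hirr : ∀ a, ¬ r a a := hacyc
  set le : Fin n → Fin n → Prop := fun a b => a = b ∨ r a b with hle
  haveI : IsPartialOrder (Fin n) le :=
    { refl := fun a => Or.inl rfl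
      trans := by
        rintro a b c (rfl | hab) (rfl | hbc)
        · exact Or.inl rfl
        · exact Or.inr hbc
        · exact Or.inr hab
        · exact Or.inr (hab.trans hbc)
      antisymm := by
        rintro a b (rfl | hab) (h2 | hba)
        · rfl
        · rfl
        · exact h2.symm
        · exact absurd (hab.trans hba) (hirr a) }
  obtain ⟨s, hs, hrs⟩ := extend_partialOrder le
  haveI : IsLinearOrder (Fin n) s := hs
  haveI : DecidableRel s := Classical.decRel s
  set l : List (Fin n) := Finset.univ.sort s with hl
  have hlen : l.length = n := by rw [hl, Finset.length_sort, Finset.card_univ, Fintype.card_fin]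
  have hnodup : l.Nodup := Finset.sort_nodup _ s
  have hsorted : l.Pairwise s := Finset.pairwise_sort _ s
  have hmeml : ∀ x : Fin n, x ∈ l := fun x => (Finset.mem_sort s).mpr (Finset.mem_univ x)
  have hidxlt : ∀ x : Fin n, l.idxOf x < l.length := fun x => List.idxOf_lt_length_iff.mpr (hmeml x)
  -- strict inequality of indices along s
  have hidx_mono : ∀ a b : Fin n, s a b → a ≠ b → l.idxOf a < l.idxOf b := by
    intro a b hab hne
    rcases lt_trichotomy (l.idxOf a) (l.idxOf b) with h' | h' | h'
    · exact h'
    · exfalso; apply hne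
      calc a = l.get ⟨l.idxOf a, hidxlt a⟩ := (List.idxOf_get (hidxlt a)).symm
        _ = l.get ⟨l.idxOf b, hidxlt b⟩ := by congr 1; exact Fin.ext h'
        _ = b := List.idxOf_get (hidxlt b)
    · exfalso
      have hsba : s b a := by
        have := hsorted.rel_get_of_lt (a := ⟨l.idxOf b, hidxlt b⟩) (b := ⟨l.idxOf a, hidxlt a⟩)
          (by exact h')
        rwa [List.idxOf_get, List.idxOf_get] at this
      exact hne (Std.Antisymm.antisymm _ _ hab hsba)
  -- head has strictly smaller index than other members
  have hhead : ∀ (U : {U : Finset (Fin n) // U.card = k}) (b : Fin n),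
      b ∈ U.1 → b ≠ h U → l.idxOf (h U) < l.idxOf b := by
    intro U b hb hne
    have hRb : R (h U) b := ⟨U, rfl, hb, hne⟩
    have : s (h U) b := hrs _ _ (Or.inr (Relation.TransGen.single hRb))
    exact hidx_mono _ _ this hne.symm
  -- index bound for heads
  have hbound : ∀ U : {U : Finset (Fin n) // U.card = k}, l.idxOf (h U) < n - k + 1 := by
    intro U
    have hinj : Set.InjOn (fun x => l.idxOf x) (U.1.erase (h U) : Finset (Fin n)) := by
      intro x _ y _ hxy
      calc x = l.get ⟨l.idxOf x, hidxlt x⟩ := (List.idxOf_get (hidxlt x)).symm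
        _ = l.get ⟨l.idxOf y, hidxlt y⟩ := by congr 1; exact Fin.ext hxy
        _ = y := List.idxOf_get (hidxlt y)
    have hsub : (U.1.erase (h U)).image (fun x => l.idxOf x) ⊆
        Finset.Ico (l.idxOf (h U) + 1) n := by
      intro i hi
      simp only [Finset.mem_image] at hi
      obtain ⟨x, hx, rfl⟩ := hi
      rw [Finset.mem_Ico]
      refine ⟨?_, by have := hidxlt x; omega⟩
      have := hhead U x (Finset.mem_of_mem_erase hx) (Finset.ne_of_mem_erase hx)
      omega
    have hcard : ((U.1.erase (h U)).image (fun x => l.idxOf x)).card = k - 1 := by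
      rw [Finset.card_image_of_injOn hinj, Finset.card_erase_of_mem (hmem U), U.2]
    have := Finset.card_le_card hsub
    rw [hcard, Nat.card_Ico] at this
    have := hidxlt (h U)
    omega
  -- the embedding
  set f : Fin (n - k + 1) ↪ Fin n :=
    ⟨fun j => l.get ⟨j.val, by rw [hlen]; omega⟩, by
      intro a b hab
      have := List.nodup_iff_injective_get.mp hnodup hab
      injection this with h2
      exact Fin.ext h2⟩ with hf
  refine ⟨f, ?_⟩
  funext U
  have hfj : f ⟨l.idxOf (h U), hbound U⟩ = h U := List.idxOf_get (hidxlt (h U))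
  have hmin : (Finset.univ.filter fun i => f i ∈ U.1).min' (filter_nonempty hkn f U.1 U.2)
      = ⟨l.idxOf (h U), hbound U⟩ := by
    apply le_antisymm
    · apply Finset.min'_le
      simp only [Finset.mem_filter, Finset.mem_univ, true_and]
      rw [hfj]; exact hmem U
    · apply Finset.le_min'
      intro i hi
      simp only [Finset.mem_filter, Finset.mem_univ, true_and] at hi
      by_cases hieq : f i = h U
      · have : f ⟨l.idxOf (h U), hbound U⟩ = f i := by rw [hfj, hieq]
        rw [f.injective this]
      · have hlt := hhead U (f i) hi hieq
        have : l.idxOf (f i) = i.val := by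
          have : f i = l.get ⟨i.val, by rw [hlen]; omega⟩ := rfl
          rw [this, List.get_idxOf hnodup]
        rw [this] at hlt
        exact le_of_lt hlt
  rw [Phi, hmin, hfj]

end Stmt3Aux2

/-- For the hypergraph of all `k`-element subsets of `[n]` (`2 ≤ k ≤ n`), the
number of acyclic orientations with all heads singletons equals `n!/(k-1)!`. -/
theorem stmt3 (n k : ℕ) (hk : 2 ≤ k) (hkn : k ≤ n) :
    {h : {U : Finset (Fin n) // U.card = k} → Fin n |
      (∀ U, h U ∈ U.1) ∧
      (∀ a : Fin n, ¬ Relation.TransGen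
        (fun a b => ∃ U, h U = a ∧ b ∈ U.1 ∧ b ≠ a) a a)}.ncard
      = Nat.factorial n / Nat.factorial (k - 1) := by
  classical
  set S := {h : {U : Finset (Fin n) // U.card = k} → Fin n |
      (∀ U, h U ∈ U.1) ∧
      (∀ a : Fin n, ¬ Relation.TransGen
        (fun a b => ∃ U, h U = a ∧ b ∈ U.1 ∧ b ≠ a) a a)} with hS
  have hbij : Function.Bijective (fun f : Fin (n - k + 1) ↪ Fin n =>
      (⟨Stmt3Aux.Phi hkn f, Stmt3Aux.Phi_mem hkn f, Stmt3Aux.Phi_acyclic hkn f⟩ : S)) := by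
    constructor
    · intro f g hfg
      apply Stmt3Aux.Phi_injective hk hkn
      exact congrArg Subtype.val hfg
    · rintro ⟨h, h1, h2⟩
      obtain ⟨f, hf⟩ := Stmt3Aux2.Phi_surjective hk hkn h h1 h2
      exact ⟨f, Subtype.ext hf⟩
  have hcard : S.ncard = Fintype.card (Fin (n - k + 1) ↪ Fin n) := by
    rw [← Nat.card_coe_set_eq, ← Nat.card_eq_fintype_card]
    exact (Nat.card_congr (Equiv.ofBijective _ hbij)).symm
  have h3 : n - (n - k + 1) = k - 1 := by omega
  rw [hcard, Fintype.card_embedding_eq, Fintype.card_fin, Fintype.card_fin,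
    Nat.descFactorial_eq_div (by omega), h3]
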